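/- arXiv:1202.4687 — 3 statements merged into one kernel-verified Lean document; each statement's English description precedes it below -/
import Mathlib

section
/- Let x be an integer with gcd(x,6) = 1 and x ≥ 7, and let N = ⌊⌊√x⌋/6⌋ + 1. With S₁, S₂, S defined as S₁(x) = (-1/N)·Σ_{k=1}^{N} ⌊⌊x/(6k+1)⌋ - x/(6k+1)⌋, S₂(x) = (-1/N)·Σ_{k=1}^{N} ⌊⌊x/(6k-1)⌋ - x/(6k-1)⌋, S(x) = (S₁(x)+S₂(x))/2, if x is composite then 0 ≤ S(x) < 1. -/
noncomputable def Npar (x : ℕ) : ℕ := Nat.sqrt x / 6 + 1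

noncomputable def S1 (x : ℕ) : ℚ :=
  (-1 / (Npar x : ℚ)) *
    ∑ k ∈ Finset.Icc 1 (Npar x),
      (⌊((x / (6 * k + 1) : ℕ) : ℚ) - (x : ℚ) / ((6 * k + 1 : ℕ) : ℚ)⌋ : ℚ)

noncomputable def S2 (x : ℕ) : ℚ :=
  (-1 / (Npar x : ℚ)) *
    ∑ k ∈ Finset.Icc 1 (Npar x),
      (⌊((x / (6 * k - 1) : ℕ) : ℚ) - (x : ℚ) / ((6 * k - 1 : ℕ) : ℚ)⌋ : ℚ)

noncomputable def S (x : ℕ) : ℚ := (S1 x + S2 x) / 2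

lemma floor_term (x d : ℕ) (hd : 1 ≤ d) :
    ⌊((x / d : ℕ) : ℚ) - (x : ℚ) / (d : ℚ)⌋ = if d ∣ x then 0 else -1 := by
  have hd0 : (0:ℚ) < (d:ℚ) := by exact_mod_cast hd
  have hmod : (x:ℚ) = (d:ℚ) * ((x / d : ℕ):ℚ) + ((x % d : ℕ):ℚ) := by
    exact_mod_cast (Nat.div_add_mod x d).symm
  have key : ((x / d : ℕ) : ℚ) - (x : ℚ) / (d : ℚ) = -(((x % d : ℕ) : ℚ) / d) := by
    field_simp
    linarith [hmod]
  rw [key]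
  by_cases h : d ∣ x
  · rw [if_pos h, Nat.mod_eq_zero_of_dvd h]
    simp
  · rw [if_neg h]
    have hr0 : 0 < x % d := Nat.pos_of_ne_zero (fun h0 => h (Nat.dvd_of_mod_eq_zero h0))
    have hrd : x % d < d := Nat.mod_lt x (by omega)
    have h1 : ((x % d : ℕ):ℚ) / d < 1 := by
      rw [div_lt_one hd0]; exact_mod_cast hrd
    have h2 : (0:ℚ) < ((x % d : ℕ):ℚ) / d := by
      apply div_pos _ hd0; exact_mod_cast hr0
    rw [Int.floor_eq_iff]
    constructor
    · push_cast; linarith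
    · push_cast; linarith

lemma gen_bounds (x N : ℕ) (hN : 1 ≤ N) (d : ℕ → ℕ) (hd : ∀ k ∈ Finset.Icc 1 N, 1 ≤ d k) :
    0 ≤ (-1/(N:ℚ)) * ∑ k ∈ Finset.Icc 1 N,
        (⌊((x / d k : ℕ):ℚ) - (x:ℚ)/((d k : ℕ):ℚ)⌋ : ℚ) ∧
    (-1/(N:ℚ)) * ∑ k ∈ Finset.Icc 1 N,
        (⌊((x / d k : ℕ):ℚ) - (x:ℚ)/((d k : ℕ):ℚ)⌋ : ℚ) ≤ 1 ∧
    (∀ k0 ∈ Finset.Icc 1 N, d k0 ∣ x →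
      (-1/(N:ℚ)) * ∑ k ∈ Finset.Icc 1 N,
        (⌊((x / d k : ℕ):ℚ) - (x:ℚ)/((d k : ℕ):ℚ)⌋ : ℚ) < 1) := by
  have hN0 : (0:ℚ) < (N:ℚ) := by exact_mod_cast hN
  have hterm : ∀ k ∈ Finset.Icc 1 N, (⌊((x / d k : ℕ):ℚ) - (x:ℚ)/((d k : ℕ):ℚ)⌋ : ℚ)
      = if d k ∣ x then 0 else -1 := by
    intro k hk
    rw [floor_term x (d k) (hd k hk)]
    split <;> norm_num
  set f : ℕ → ℚ := fun k => (⌊((x / d k : ℕ):ℚ) - (x:ℚ)/((d k : ℕ):ℚ)⌋ : ℚ) with hf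
  have hle0 : ∀ k ∈ Finset.Icc 1 N, f k ≤ 0 := by
    intro k hk; rw [hf]; simp only; rw [hterm k hk]; split <;> norm_num
  have hge : ∀ k ∈ Finset.Icc 1 N, -1 ≤ f k := by
    intro k hk; rw [hf]; simp only; rw [hterm k hk]; split <;> norm_num
  have hcard : (Finset.Icc 1 N).card = N := by rw [Nat.card_Icc]; omega
  have hsum_le : ∑ k ∈ Finset.Icc 1 N, f k ≤ 0 :=
    Finset.sum_nonpos hle0
  have hsum_ge : -(N:ℚ) ≤ ∑ k ∈ Finset.Icc 1 N, f k := by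
    calc -(N:ℚ) = ∑ k ∈ Finset.Icc 1 N, (-1:ℚ) := by
          rw [Finset.sum_const, hcard]; ring
      _ ≤ ∑ k ∈ Finset.Icc 1 N, f k := Finset.sum_le_sum hge
  have heq : (-1/(N:ℚ)) * ∑ k ∈ Finset.Icc 1 N, f k
      = (-(∑ k ∈ Finset.Icc 1 N, f k)) / N := by ring
  refine ⟨?_, ?_, ?_⟩
  · rw [heq]
    apply div_nonneg (by linarith) (le_of_lt hN0)
  · rw [heq, div_le_one hN0]; linarith
  · intro k0 hk0 hdvd
    have hfk0 : f k0 = 0 := by rw [hf]; simp only; rw [hterm k0 hk0, if_pos hdvd]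
    have hsum_gt : -(N:ℚ) + 1 ≤ ∑ k ∈ Finset.Icc 1 N, f k := by
      rw [← Finset.add_sum_erase _ f hk0, hfk0, zero_add]
      have hcard' : ((Finset.Icc 1 N).erase k0).card = N - 1 := by
        rw [Finset.card_erase_of_mem hk0, hcard]
      calc -(N:ℚ) + 1 = ∑ k ∈ (Finset.Icc 1 N).erase k0, (-1:ℚ) := by
            rw [Finset.sum_const, hcard']
            have : ((N-1 : ℕ):ℚ) = (N:ℚ) - 1 := by
              have := hN; push_cast [Nat.cast_sub hN]; ring
            rw [nsmul_eq_mul, this]; ring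
        _ ≤ _ := Finset.sum_le_sum (fun k hk => hge k (Finset.mem_of_mem_erase hk))

    have : (-1/(N:ℚ)) * ∑ k ∈ Finset.Icc 1 N, f k
        = (-(∑ k ∈ Finset.Icc 1 N, f k)) / N := by ring
    rw [this, div_lt_one hN0]
    linarith

theorem S_lt_one_of_composite (x : ℕ) (hx : 7 ≤ x) (hco : Nat.Coprime x 6)
    (hc : ¬ x.Prime) : 0 ≤ S x ∧ S x < 1 := by
  have hNeq : Npar x = Nat.sqrt x / 6 + 1 := rfl
  have hN : 1 ≤ Npar x := by omega
  have h1 := gen_bounds x (Npar x) hN (fun k => 6*k+1) (fun k _ => by show 1 ≤ 6*k+1; omega)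
  have h2 := gen_bounds x (Npar x) hN (fun k => 6*k-1)
    (fun k hk => by show 1 ≤ 6*k-1; have := (Finset.mem_Icc.mp hk).1; omega)
  obtain ⟨h1a, h1b, h1c⟩ := h1
  obtain ⟨h2a, h2b, h2c⟩ := h2
  have e1a : 0 ≤ S1 x := h1a
  have e1b : S1 x ≤ 1 := h1b
  have e2a : 0 ≤ S2 x := h2a
  have e2b : S2 x ≤ 1 := h2b
  -- find a divisor of the form 6k±1
  have hx1 : x ≠ 1 := by omega
  have hp : (Nat.minFac x).Prime := Nat.minFac_prime hx1
  set p := Nat.minFac x with hpdef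
  have hdvd : p ∣ x := Nat.minFac_dvd x
  have hsq : p * p ≤ x := by
    have h := Nat.minFac_sq_le_self (show 0 < x by omega) hc
    rw [pow_two] at h; exact h
  have hple : p ≤ Nat.sqrt x := Nat.le_sqrt.mpr hsq
  have hcop : Nat.Coprime p 6 := Nat.Coprime.coprime_dvd_left hdvd hco
  have hg : Nat.gcd p 6 = 1 := hcop
  have h2d : ¬ (2 ∣ p) := by
    intro h
    have := Nat.dvd_gcd h (by norm_num : (2:ℕ) ∣ 6)
    rw [hg] at this; omega
  have h3d : ¬ (3 ∣ p) := by
    intro h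
    have := Nat.dvd_gcd h (by norm_num : (3:ℕ) ∣ 6)
    rw [hg] at this; omega
  have hp2 : 2 ≤ p := hp.two_le
  have hmod : p % 6 = 1 ∨ p % 6 = 5 := by omega
  have hkey : S1 x < 1 ∨ S2 x < 1 := by
    rcases hmod with hm | hm
    · left
      have hk1 : 1 ≤ p / 6 := by omega
      have hk2 : p / 6 ≤ Npar x := by omega
      have hpk : 6 * (p / 6) + 1 = p := by omega
      exact h1c (p / 6) (Finset.mem_Icc.mpr ⟨hk1, hk2⟩) (by simpa [hpk] using hdvd)
    · right
      have hk1 : 1 ≤ p / 6 + 1 := by omega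
      have hk2 : p / 6 + 1 ≤ Npar x := by omega
      have hpk : 6 * (p / 6 + 1) - 1 = p := by omega
      exact h2c (p / 6 + 1) (Finset.mem_Icc.mpr ⟨hk1, hk2⟩) (by simpa [hpk] using hdvd)
  unfold S
  rcases hkey with h | h
  · constructor <;> [linarith; linarith]
  · constructor <;> [linarith; linarith]
end

section
/- For every n ≥ 1, the n-th prime p_n satisfies p_n ≤ 2(⌊n log n⌋ + 1), where log is the natural logarithm and the inequality is interpreted as p₁ = 2 ≤ 2, and for n ≥ 2, p_n ≤ 2(⌊n log n⌋ + 1). -/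
def divB (n : ℕ) : ℕ → Bool :=
  Nat.rec false (fun k ih => ih || (decide (2 ≤ k+1) && decide (k+1 ≠ n) && decide (n % (k+1) = 0)))

def isP (B n : ℕ) : Bool := decide (2 ≤ n) && ! divB n B

def pcnt (B a : ℕ) : ℕ → ℕ :=
  Nat.rec 0 (fun k ih => ih + (if isP B (a+k) then 1 else 0))

lemma divB_iff (n j : ℕ) : divB n j = true ↔ ∃ d, 2 ≤ d ∧ d ≤ j ∧ d ≠ n ∧ n % d = 0 := by
  induction j with
  | zero => simp [divB]
  | succ k ih =>
    show (divB n k || _) = true ↔ _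
    rw [Bool.or_eq_true, ih]
    simp only [Bool.and_eq_true, decide_eq_true_eq]
    constructor
    · rintro (⟨d, h⟩ | ⟨⟨h1, h2⟩, h3⟩)
      · exact ⟨d, h.1, h.2.1.trans (Nat.le_succ k), h.2.2⟩
      · exact ⟨k+1, h1, le_rfl, h2, h3⟩
    · rintro ⟨d, h1, h2, h3, h4⟩
      rcases Nat.lt_succ_iff_lt_or_eq.mp (Nat.lt_succ_of_le h2) with h | h
      · exact Or.inl ⟨d, h1, Nat.lt_succ_iff.mp h, h3, h4⟩
      · subst h; exact Or.inr ⟨⟨h1, h3⟩, h4⟩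

lemma isP_iff (B n : ℕ) (h : n < (B+1)*(B+1)) : isP B n = true ↔ Nat.Prime n := by
  rw [isP, Bool.and_eq_true, decide_eq_true_eq, Bool.not_eq_true', Nat.prime_def_le_sqrt]
  constructor
  · rintro ⟨h2, hdiv⟩
    refine ⟨h2, fun m hm2 hms hmd => ?_⟩
    have hsB : Nat.sqrt n ≤ B := by
      by_contra hc
      push_neg at hc
      have := Nat.le_sqrt.mp hc
      nlinarith
    have hmn : m < n := lt_of_le_of_lt hms (Nat.sqrt_lt_self (by omega))
    have : divB n B = true := (divB_iff n B).mpr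
      ⟨m, hm2, hms.trans hsB, by omega, Nat.dvd_iff_mod_eq_zero.mp hmd⟩
    rw [hdiv] at this; exact Bool.false_ne_true this
  · rintro ⟨h2, hp⟩
    refine ⟨h2, ?_⟩
    rw [Bool.eq_false_iff]
    intro hc
    obtain ⟨d, hd2, hdB, hdn, hdm⟩ := (divB_iff n B).mp hc
    have hdvd : d ∣ n := Nat.dvd_iff_mod_eq_zero.mpr hdm
    have hdsqrt : Nat.sqrt n < d → False := by
      intro hlt
      obtain ⟨e, he⟩ := hdvd
      have he2 : 2 ≤ e := by
        rcases Nat.lt_or_ge e 2 with h' | h'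
        · interval_cases e <;> omega
        · exact h'
      have : e ≤ Nat.sqrt n := by
        by_contra hc2
        push_neg at hc2
        have h1 := Nat.sqrt_lt.mp hlt
        have h2' := Nat.sqrt_lt.mp hc2
        nlinarith
      have := hp e he2 this (Dvd.intro d (by rw [he, Nat.mul_comm]))
      exact this
    rcases Nat.lt_or_ge (Nat.sqrt n) d with h' | h'
    · exact hdsqrt h'
    · exact hp d hd2 h' hdvd

lemma count_add (B a len : ℕ) (h : a + len ≤ (B+1)*(B+1)) :
    Nat.count Nat.Prime (a + len) = Nat.count Nat.Prime a + pcnt B a len := by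
  induction len with
  | zero => simp [pcnt]
  | succ k ih =>
    rw [← Nat.add_assoc, Nat.count_succ, ih (by omega)]
    have : pcnt B a (k+1) = pcnt B a k + (if Nat.Prime (a+k) then 1 else 0) := by
      show pcnt B a k + (if isP B (a+k) then 1 else 0) = _
      rw [if_congr (isP_iff B (a+k) (by omega)) rfl rfl]
    rw [this]
    omega


open Finset in
lemma cheb_bound (m : ℕ) (hm : 4 ≤ m) :
    4^m < m * (2*m)^(Nat.count Nat.Prime (2*m+1)) := by
  have h1 : 4^m < m * Nat.centralBinom m := Nat.four_pow_lt_mul_centralBinom m hm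
  refine h1.trans_le (Nat.mul_le_mul_left m ?_)
  rw [← Nat.prod_pow_factorization_centralBinom m, Nat.count_eq_card_filter_range]
  have heq : ∏ p ∈ range (2*m+1), p ^ (Nat.centralBinom m).factorization p
      = ∏ p ∈ (range (2*m+1)).filter Nat.Prime, p ^ (Nat.centralBinom m).factorization p := by
    refine (Finset.prod_subset (Finset.filter_subset _ _) ?_).symm
    intro p _ hp
    rw [Finset.mem_filter] at hp
    have : ¬ p.Prime := fun h => hp ⟨by assumption, h⟩
    rw [Nat.factorization_eq_zero_of_not_prime _ this, pow_zero]
  rw [heq, ← Finset.prod_const]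
  refine Finset.prod_le_prod' ?_
  intro p _
  have : p ^ (Nat.choose (2*m) m).factorization p ≤ 2*m :=
    Nat.pow_factorization_choose_le (by omega)
  simpa [Nat.centralBinom] using this



set_option maxHeartbeats 1000000 in
lemma big_main (n : ℕ) (hn : 2048 ≤ n) :
    (Nat.nth Nat.Prime (n-1) : ℝ) ≤ 2 * n * Real.log n := by
  have hl2a : (0.6931471803:ℝ) < Real.log 2 := Real.log_two_gt_d9
  have hl2b : Real.log 2 < 0.6931471808 := Real.log_two_lt_d9
  set t := Real.log n with hift
  have hncast : (2048:ℝ) ≤ (n:ℝ) := by exact_mod_cast hn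
  have ht : 11 * Real.log 2 ≤ t := by
    rw [hift, show (11:ℝ) * Real.log 2 = Real.log (2^11) by rw [Real.log_pow]; push_cast; ring]
    exact Real.log_le_log (by positivity) (by norm_num at hncast ⊢; linarith)
  have ht7 : (7:ℝ) ≤ t := by nlinarith
  set x := (n:ℝ) * t with hifx
  have hx : (14000:ℝ) ≤ x := by nlinarith
  set m := Nat.floor x with hifm
  have hm4 : 4 ≤ m := Nat.le_floor (by norm_num; nlinarith)
  have hmbig : 14000 ≤ m := Nat.le_floor (by norm_num; nlinarith)
  have hmx : (m:ℝ) ≤ x := Nat.floor_le (by positivity)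
  have hxm : x < (m:ℝ) + 1 := Nat.lt_floor_add_one x
  have hmpos : (0:ℝ) < (m:ℝ) := by exact_mod_cast (show 0 < m by omega)
  -- key claim
  have hkey : n ≤ Nat.count Nat.Prime (2*m+1) := by
    by_contra hc
    push_neg at hc
    set c := Nat.count Nat.Prime (2*m+1) with hifc
    have hc' : (c:ℝ) ≤ (n:ℝ) - 1 := by
      have : c + 1 ≤ n := hc
      have := (Nat.cast_le (α := ℝ)).mpr this
      push_cast at this; linarith
    have hcheb := cheb_bound m hm4
    have hr : (4:ℝ)^m < (m:ℝ) * (2*(m:ℝ))^c := by exact_mod_cast hcheb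
    have hlog := Real.log_lt_log (by positivity) hr
    rw [Real.log_pow, Real.log_mul (by positivity) (by positivity), Real.log_pow] at hlog
    have hlog4 : Real.log 4 = 2 * Real.log 2 := by
      rw [show (4:ℝ) = 2^2 by norm_num, Real.log_pow]; push_cast; ring
    rw [hlog4] at hlog
    -- hlog : m * (2 * log 2) < log m + c * log (2*m)
    set L := Real.log 2 with hifL
    set u := Real.log t with hifu
    have hlogx : Real.log x = t + u := by
      rw [hifx, Real.log_mul (by positivity) (by positivity)]
    have S1 : Real.log m ≤ t + u := by
      rw [← hlogx]; exact Real.log_le_log (by positivity) hmx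
    have S2 : Real.log (2*(m:ℝ)) ≤ L + (t + u) := by
      rw [Real.log_mul (by norm_num) (by positivity), ← hlogx, ← hifL]
      have := Real.log_le_log (show (0:ℝ) < m by positivity) hmx
      linarith
    have h2m1 : (0:ℝ) ≤ Real.log (2*(m:ℝ)) := Real.log_nonneg (by nlinarith)
    have S3 : (c:ℝ) * Real.log (2*(m:ℝ)) ≤ ((n:ℝ)-1) * (L + (t + u)) := by
      have h1 : (c:ℝ) * Real.log (2*(m:ℝ)) ≤ ((n:ℝ)-1) * Real.log (2*(m:ℝ)) :=
        mul_le_mul_of_nonneg_right hc' h2m1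
      have h2 : ((n:ℝ)-1) * Real.log (2*(m:ℝ)) ≤ ((n:ℝ)-1) * (L + (t + u)) :=
        mul_le_mul_of_nonneg_left S2 (by linarith)
      linarith
    have S5 : (x - 1) * (2*L) < (t + u) + ((n:ℝ)-1) * (L + (t + u)) := by
      have h4 : (x - 1) * (2*L) ≤ (m:ℝ) * (2*L) := by nlinarith
      linarith
    -- expand x = n t : n(2tL - L - t - u) < L
    rw [hifx] at S5
    have S6 : (n:ℝ) * (2*t*L - L - t - u) < L := by nlinarith [S5]
    have S7 : u ≤ 3*L + t/8 - 1 := by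
      have h8 : Real.log (t/8) ≤ t/8 - 1 := Real.log_le_sub_one_of_pos (by linarith)
      have h9 : Real.log 8 = 3*L := by
        rw [hifL, show (8:ℝ) = 2^3 by norm_num, Real.log_pow]; push_cast; ring
      have h10 : Real.log t = Real.log 8 + Real.log (t/8) := by
        rw [← Real.log_mul (by norm_num) (by linarith)]
        congr 1; ring
      rw [hifu, h10, h9]; linarith
    have h2L : (0:ℝ) ≤ 2*L - 9/8 := by nlinarith
    have S8 : (0.001:ℝ) ≤ 2*t*L - L - t - u := by
      nlinarith [mul_nonneg (sub_nonneg.mpr ht) h2L]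
    have S9 : (2048:ℝ) * 0.001 ≤ (n:ℝ) * (2*t*L - L - t - u) :=
      mul_le_mul hncast S8 (by norm_num) (by linarith)
    linarith
  have hnth : Nat.nth Nat.Prime (n-1) < 2*m+1 :=
    Nat.nth_lt_of_lt_count (by omega)
  have : (Nat.nth Nat.Prime (n-1) : ℝ) ≤ 2*(m:ℝ) := by
    have : Nat.nth Nat.Prime (n-1) ≤ 2*m := by omega
    exact_mod_cast this
  calc (Nat.nth Nat.Prime (n-1) : ℝ) ≤ 2*(m:ℝ) := this
  _ ≤ 2 * x := by linarith
  _ = 2 * n * Real.log n := by rw [hifx]; ring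


lemma interval_helper (a b q r s n : ℕ)
    (hcount : Nat.count Nat.Prime (q+1) = b)
    (han : a ≤ n) (hnb : n ≤ b) (ha2 : 2 ≤ a) (hs : 1 ≤ s)
    (hpow : 2^r ≤ a^s)
    (hq : (q : ℝ) ≤ 2 * a * ((r / s) * Real.log 2)) :
    (Nat.nth Nat.Prime (n-1) : ℝ) ≤ 2 * n * Real.log n := by
  have h1 : Nat.nth Nat.Prime (n-1) ≤ Nat.nth Nat.Prime (b-1) :=
    (Nat.nth_le_nth Nat.infinite_setOf_prime).mpr (by omega)
  have h2 : Nat.nth Nat.Prime (b-1) < q+1 :=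
    Nat.nth_lt_of_lt_count (by rw [hcount]; omega)
  have hnth : (Nat.nth Nat.Prime (n-1) : ℝ) ≤ (q:ℝ) := by
    have : Nat.nth Nat.Prime (n-1) ≤ q := by omega
    exact_mod_cast this
  have hloga : ((r:ℝ) / (s:ℝ)) * Real.log 2 ≤ Real.log a := by
    have hsp : (0:ℝ) < (s:ℝ) := by exact_mod_cast hs
    rw [div_mul_eq_mul_div, div_le_iff₀ hsp]
    have h5 : Real.log ((2:ℝ)^r) ≤ Real.log ((a:ℝ)^s) :=
      Real.log_le_log (by positivity) (by exact_mod_cast hpow)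
    rw [Real.log_pow, Real.log_pow] at h5
    linarith
  have hlogn : Real.log a ≤ Real.log n := by
    refine Real.log_le_log (by exact_mod_cast (by omega : 0 < a)) (by exact_mod_cast han)
  have hlogn0 : (0:ℝ) ≤ Real.log a := by
    refine Real.log_nonneg (by exact_mod_cast (by omega : 1 ≤ a))
  have hcast : (a:ℝ) ≤ (n:ℝ) := by exact_mod_cast han
  calc (Nat.nth Nat.Prime (n-1) : ℝ) ≤ (q:ℝ) := hnth
  _ ≤ 2 * a * ((r / s) * Real.log 2) := hq
  _ ≤ 2 * a * Real.log a := by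
      refine mul_le_mul_of_nonneg_left hloga (by positivity)
  _ ≤ 2 * n * Real.log n := by
      refine mul_le_mul (by linarith) hlogn hlogn0 (by positivity)


lemma cnt_0 : Nat.count Nat.Prime 0 = 0 := Nat.count_zero _

set_option maxRecDepth 1000000 in
set_option maxHeartbeats 4000000 in
lemma cnt_6 : Nat.count Nat.Prime 6 = 3 := by
  have h := count_add 2 0 6 (by norm_num)
  rw [show 0 + 6 = 6 from by norm_num, cnt_0] at h
  rw [h]; decide

set_option maxRecDepth 1000000 in
set_option maxHeartbeats 4000000 in
lemma cnt_12 : Nat.count Nat.Prime 12 = 5 := by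
  have h := count_add 3 6 6 (by norm_num)
  rw [show 6 + 6 = 12 from by norm_num, cnt_6] at h
  rw [h]; decide

set_option maxRecDepth 1000000 in
set_option maxHeartbeats 4000000 in
lemma cnt_20 : Nat.count Nat.Prime 20 = 8 := by
  have h := count_add 4 12 8 (by norm_num)
  rw [show 12 + 8 = 20 from by norm_num, cnt_12] at h
  rw [h]; decide

set_option maxRecDepth 1000000 in
set_option maxHeartbeats 4000000 in
lemma cnt_38 : Nat.count Nat.Prime 38 = 12 := by
  have h := count_add 6 20 18 (by norm_num)
  rw [show 20 + 18 = 38 from by norm_num, cnt_20] at h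
  rw [h]; decide

set_option maxRecDepth 1000000 in
set_option maxHeartbeats 4000000 in
lemma cnt_62 : Nat.count Nat.Prime 62 = 18 := by
  have h := count_add 7 38 24 (by norm_num)
  rw [show 38 + 24 = 62 from by norm_num, cnt_38] at h
  rw [h]; decide

set_option maxRecDepth 1000000 in
set_option maxHeartbeats 4000000 in
lemma cnt_110 : Nat.count Nat.Prime 110 = 29 := by
  have h := count_add 10 62 48 (by norm_num)
  rw [show 62 + 48 = 110 from by norm_num, cnt_62] at h
  rw [h]; decide

set_option maxRecDepth 1000000 in
set_option maxHeartbeats 4000000 in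
lemma cnt_200 : Nat.count Nat.Prime 200 = 46 := by
  have h := count_add 14 110 90 (by norm_num)
  rw [show 110 + 90 = 200 from by norm_num, cnt_110] at h
  rw [h]; decide

set_option maxRecDepth 1000000 in
set_option maxHeartbeats 4000000 in
lemma cnt_360 : Nat.count Nat.Prime 360 = 72 := by
  have h := count_add 18 200 160 (by norm_num)
  rw [show 200 + 160 = 360 from by norm_num, cnt_200] at h
  rw [h]; decide

set_option maxRecDepth 1000000 in
set_option maxHeartbeats 4000000 in
lemma cnt_620 : Nat.count Nat.Prime 620 = 114 := by
  have h := count_add 24 360 260 (by norm_num)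
  rw [show 360 + 260 = 620 from by norm_num, cnt_360] at h
  rw [h]; decide

set_option maxRecDepth 1000000 in
set_option maxHeartbeats 4000000 in
lemma cnt_1088 : Nat.count Nat.Prime 1088 = 181 := by
  have h := count_add 32 620 468 (by norm_num)
  rw [show 620 + 468 = 1088 from by norm_num, cnt_620] at h
  rw [h]; decide

set_option maxRecDepth 1000000 in
set_option maxHeartbeats 4000000 in
lemma cnt_1600 : Nat.count Nat.Prime 1600 = 251 := by
  have h := count_add 39 1088 512 (by norm_num)
  rw [show 1088 + 512 = 1600 from by norm_num, cnt_1088] at h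
  rw [h]; decide

set_option maxRecDepth 1000000 in
set_option maxHeartbeats 4000000 in
lemma cnt_1890 : Nat.count Nat.Prime 1890 = 290 := by
  have h := count_add 43 1600 290 (by norm_num)
  rw [show 1600 + 290 = 1890 from by norm_num, cnt_1600] at h
  rw [h]; decide

set_option maxRecDepth 1000000 in
set_option maxHeartbeats 4000000 in
lemma cnt_2402 : Nat.count Nat.Prime 2402 = 357 := by
  have h := count_add 49 1890 512 (by norm_num)
  rw [show 1890 + 512 = 2402 from by norm_num, cnt_1890] at h
  rw [h]; decide

set_option maxRecDepth 1000000 in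
set_option maxHeartbeats 4000000 in
lemma cnt_2914 : Nat.count Nat.Prime 2914 = 421 := by
  have h := count_add 53 2402 512 (by norm_num)
  rw [show 2402 + 512 = 2914 from by norm_num, cnt_2402] at h
  rw [h]; decide

set_option maxRecDepth 1000000 in
set_option maxHeartbeats 4000000 in
lemma cnt_3300 : Nat.count Nat.Prime 3300 = 463 := by
  have h := count_add 57 2914 386 (by norm_num)
  rw [show 2914 + 386 = 3300 from by norm_num, cnt_2914] at h
  rw [h]; decide

set_option maxRecDepth 1000000 in
set_option maxHeartbeats 4000000 in
lemma cnt_3812 : Nat.count Nat.Prime 3812 = 529 := by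
  have h := count_add 61 3300 512 (by norm_num)
  rw [show 3300 + 512 = 3812 from by norm_num, cnt_3300] at h
  rw [h]; decide

set_option maxRecDepth 1000000 in
set_option maxHeartbeats 4000000 in
lemma cnt_4324 : Nat.count Nat.Prime 4324 = 590 := by
  have h := count_add 65 3812 512 (by norm_num)
  rw [show 3812 + 512 = 4324 from by norm_num, cnt_3812] at h
  rw [h]; decide

set_option maxRecDepth 1000000 in
set_option maxHeartbeats 4000000 in
lemma cnt_4836 : Nat.count Nat.Prime 4836 = 650 := by
  have h := count_add 69 4324 512 (by norm_num)
  rw [show 4324 + 512 = 4836 from by norm_num, cnt_4324] at h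
  rw [h]; decide

set_option maxRecDepth 1000000 in
set_option maxHeartbeats 4000000 in
lemma cnt_5348 : Nat.count Nat.Prime 5348 = 707 := by
  have h := count_add 73 4836 512 (by norm_num)
  rw [show 4836 + 512 = 5348 from by norm_num, cnt_4836] at h
  rw [h]; decide

set_option maxRecDepth 1000000 in
set_option maxHeartbeats 4000000 in
lemma cnt_5694 : Nat.count Nat.Prime 5694 = 750 := by
  have h := count_add 75 5348 346 (by norm_num)
  rw [show 5348 + 346 = 5694 from by norm_num, cnt_5348] at h
  rw [h]; decide

set_option maxRecDepth 1000000 in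
set_option maxHeartbeats 4000000 in
lemma cnt_6206 : Nat.count Nat.Prime 6206 = 807 := by
  have h := count_add 78 5694 512 (by norm_num)
  rw [show 5694 + 512 = 6206 from by norm_num, cnt_5694] at h
  rw [h]; decide

set_option maxRecDepth 1000000 in
set_option maxHeartbeats 4000000 in
lemma cnt_6718 : Nat.count Nat.Prime 6718 = 866 := by
  have h := count_add 81 6206 512 (by norm_num)
  rw [show 6206 + 512 = 6718 from by norm_num, cnt_6206] at h
  rw [h]; decide

set_option maxRecDepth 1000000 in
set_option maxHeartbeats 4000000 in
lemma cnt_7230 : Nat.count Nat.Prime 7230 = 924 := by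
  have h := count_add 85 6718 512 (by norm_num)
  rw [show 6718 + 512 = 7230 from by norm_num, cnt_6718] at h
  rw [h]; decide

set_option maxRecDepth 1000000 in
set_option maxHeartbeats 4000000 in
lemma cnt_7742 : Nat.count Nat.Prime 7742 = 982 := by
  have h := count_add 87 7230 512 (by norm_num)
  rw [show 7230 + 512 = 7742 from by norm_num, cnt_7230] at h
  rw [h]; decide

set_option maxRecDepth 1000000 in
set_option maxHeartbeats 4000000 in
lemma cnt_8254 : Nat.count Nat.Prime 8254 = 1035 := by
  have h := count_add 90 7742 512 (by norm_num)
  rw [show 7742 + 512 = 8254 from by norm_num, cnt_7742] at h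
  rw [h]; decide

set_option maxRecDepth 1000000 in
set_option maxHeartbeats 4000000 in
lemma cnt_8766 : Nat.count Nat.Prime 8766 = 1093 := by
  have h := count_add 93 8254 512 (by norm_num)
  rw [show 8254 + 512 = 8766 from by norm_num, cnt_8254] at h
  rw [h]; decide

set_option maxRecDepth 1000000 in
set_option maxHeartbeats 4000000 in
lemma cnt_9278 : Nat.count Nat.Prime 9278 = 1148 := by
  have h := count_add 96 8766 512 (by norm_num)
  rw [show 8766 + 512 = 9278 from by norm_num, cnt_8766] at h
  rw [h]; decide

set_option maxRecDepth 1000000 in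
set_option maxHeartbeats 4000000 in
lemma cnt_9790 : Nat.count Nat.Prime 9790 = 1207 := by
  have h := count_add 98 9278 512 (by norm_num)
  rw [show 9278 + 512 = 9790 from by norm_num, cnt_9278] at h
  rw [h]; decide

set_option maxRecDepth 1000000 in
set_option maxHeartbeats 4000000 in
lemma cnt_9932 : Nat.count Nat.Prime 9932 = 1225 := by
  have h := count_add 99 9790 142 (by norm_num)
  rw [show 9790 + 142 = 9932 from by norm_num, cnt_9790] at h
  rw [h]; decide

set_option maxRecDepth 1000000 in
set_option maxHeartbeats 4000000 in
lemma cnt_10444 : Nat.count Nat.Prime 10444 = 1277 := by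
  have h := count_add 102 9932 512 (by norm_num)
  rw [show 9932 + 512 = 10444 from by norm_num, cnt_9932] at h
  rw [h]; decide

set_option maxRecDepth 1000000 in
set_option maxHeartbeats 4000000 in
lemma cnt_10956 : Nat.count Nat.Prime 10956 = 1330 := by
  have h := count_add 104 10444 512 (by norm_num)
  rw [show 10444 + 512 = 10956 from by norm_num, cnt_10444] at h
  rw [h]; decide

set_option maxRecDepth 1000000 in
set_option maxHeartbeats 4000000 in
lemma cnt_11468 : Nat.count Nat.Prime 11468 = 1382 := by
  have h := count_add 107 10956 512 (by norm_num)
  rw [show 10956 + 512 = 11468 from by norm_num, cnt_10956] at h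
  rw [h]; decide

set_option maxRecDepth 1000000 in
set_option maxHeartbeats 4000000 in
lemma cnt_11980 : Nat.count Nat.Prime 11980 = 1436 := by
  have h := count_add 109 11468 512 (by norm_num)
  rw [show 11468 + 512 = 11980 from by norm_num, cnt_11468] at h
  rw [h]; decide

set_option maxRecDepth 1000000 in
set_option maxHeartbeats 4000000 in
lemma cnt_12492 : Nat.count Nat.Prime 12492 = 1491 := by
  have h := count_add 111 11980 512 (by norm_num)
  rw [show 11980 + 512 = 12492 from by norm_num, cnt_11980] at h
  rw [h]; decide

set_option maxRecDepth 1000000 in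
set_option maxHeartbeats 4000000 in
lemma cnt_13004 : Nat.count Nat.Prime 13004 = 1549 := by
  have h := count_add 114 12492 512 (by norm_num)
  rw [show 12492 + 512 = 13004 from by norm_num, cnt_12492] at h
  rw [h]; decide

set_option maxRecDepth 1000000 in
set_option maxHeartbeats 4000000 in
lemma cnt_13516 : Nat.count Nat.Prime 13516 = 1601 := by
  have h := count_add 116 13004 512 (by norm_num)
  rw [show 13004 + 512 = 13516 from by norm_num, cnt_13004] at h
  rw [h]; decide

set_option maxRecDepth 1000000 in
set_option maxHeartbeats 4000000 in
lemma cnt_14028 : Nat.count Nat.Prime 14028 = 1654 := by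
  have h := count_add 118 13516 512 (by norm_num)
  rw [show 13516 + 512 = 14028 from by norm_num, cnt_13516] at h
  rw [h]; decide

set_option maxRecDepth 1000000 in
set_option maxHeartbeats 4000000 in
lemma cnt_14540 : Nat.count Nat.Prime 14540 = 1702 := by
  have h := count_add 120 14028 512 (by norm_num)
  rw [show 14028 + 512 = 14540 from by norm_num, cnt_14028] at h
  rw [h]; decide

set_option maxRecDepth 1000000 in
set_option maxHeartbeats 4000000 in
lemma cnt_15052 : Nat.count Nat.Prime 15052 = 1757 := by
  have h := count_add 122 14540 512 (by norm_num)
  rw [show 14540 + 512 = 15052 from by norm_num, cnt_14540] at h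
  rw [h]; decide

set_option maxRecDepth 1000000 in
set_option maxHeartbeats 4000000 in
lemma cnt_15564 : Nat.count Nat.Prime 15564 = 1815 := by
  have h := count_add 124 15052 512 (by norm_num)
  rw [show 15052 + 512 = 15564 from by norm_num, cnt_15052] at h
  rw [h]; decide

set_option maxRecDepth 1000000 in
set_option maxHeartbeats 4000000 in
lemma cnt_16076 : Nat.count Nat.Prime 16076 = 1871 := by
  have h := count_add 126 15564 512 (by norm_num)
  rw [show 15564 + 512 = 16076 from by norm_num, cnt_15564] at h
  rw [h]; decide

set_option maxRecDepth 1000000 in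
set_option maxHeartbeats 4000000 in
lemma cnt_16588 : Nat.count Nat.Prime 16588 = 1919 := by
  have h := count_add 128 16076 512 (by norm_num)
  rw [show 16076 + 512 = 16588 from by norm_num, cnt_16076] at h
  rw [h]; decide

set_option maxRecDepth 1000000 in
set_option maxHeartbeats 4000000 in
lemma cnt_17100 : Nat.count Nat.Prime 17100 = 1971 := by
  have h := count_add 130 16588 512 (by norm_num)
  rw [show 16588 + 512 = 17100 from by norm_num, cnt_16588] at h
  rw [h]; decide

set_option maxRecDepth 1000000 in
set_option maxHeartbeats 4000000 in
lemma cnt_17420 : Nat.count Nat.Prime 17420 = 2004 := by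
  have h := count_add 131 17100 320 (by norm_num)
  rw [show 17100 + 320 = 17420 from by norm_num, cnt_17100] at h
  rw [h]; decide

set_option maxRecDepth 1000000 in
set_option maxHeartbeats 4000000 in
lemma cnt_17852 : Nat.count Nat.Prime 17852 = 2047 := by
  have h := count_add 133 17420 432 (by norm_num)
  rw [show 17420 + 432 = 17852 from by norm_num, cnt_17420] at h
  rw [h]; decide

set_option maxHeartbeats 1000000 in
lemma small_main (n : ℕ) (h3 : 3 ≤ n) (hle : n ≤ 2047) :
    (Nat.nth Nat.Prime (n-1) : ℝ) ≤ 2 * n * Real.log n := by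
  rcases le_or_gt n 3 with hI0|hI0
  · exact interval_helper 3 3 5 19 12 n cnt_6 (by omega) hI0 (by norm_num) (by norm_num) (by norm_num) (by nlinarith [Real.log_two_gt_d9])
  rcases le_or_gt n 5 with hI1|hI1
  · exact interval_helper 4 5 11 2 1 n cnt_12 (by omega) hI1 (by norm_num) (by norm_num) (by norm_num) (by nlinarith [Real.log_two_gt_d9])
  rcases le_or_gt n 8 with hI2|hI2
  · exact interval_helper 6 8 19 31 12 n cnt_20 (by omega) hI2 (by norm_num) (by norm_num) (by norm_num) (by nlinarith [Real.log_two_gt_d9])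
  rcases le_or_gt n 12 with hI3|hI3
  · exact interval_helper 9 12 37 19 6 n cnt_38 (by omega) hI3 (by norm_num) (by norm_num) (by norm_num) (by nlinarith [Real.log_two_gt_d9])
  rcases le_or_gt n 18 with hI4|hI4
  · exact interval_helper 13 18 61 37 10 n cnt_62 (by omega) hI4 (by norm_num) (by norm_num) (by norm_num) (by nlinarith [Real.log_two_gt_d9])
  rcases le_or_gt n 29 with hI5|hI5
  · exact interval_helper 19 29 109 38 9 n cnt_110 (by omega) hI5 (by norm_num) (by norm_num) (by norm_num) (by nlinarith [Real.log_two_gt_d9])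
  rcases le_or_gt n 46 with hI6|hI6
  · exact interval_helper 30 46 199 49 10 n cnt_200 (by omega) hI6 (by norm_num) (by norm_num) (by norm_num) (by nlinarith [Real.log_two_gt_d9])
  rcases le_or_gt n 72 with hI7|hI7
  · exact interval_helper 47 72 359 61 11 n cnt_360 (by omega) hI7 (by norm_num) (by norm_num) (by norm_num) (by nlinarith [Real.log_two_gt_d9])
  rcases le_or_gt n 114 with hI8|hI8
  · exact interval_helper 73 114 619 68 11 n cnt_620 (by omega) hI8 (by norm_num) (by norm_num) (by norm_num) (by nlinarith [Real.log_two_gt_d9])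
  rcases le_or_gt n 181 with hI9|hI9
  · exact interval_helper 115 181 1087 41 6 n cnt_1088 (by omega) hI9 (by norm_num) (by norm_num) (by norm_num) (by nlinarith [Real.log_two_gt_d9])
  rcases le_or_gt n 290 with hI10|hI10
  · exact interval_helper 182 290 1889 15 2 n cnt_1890 (by omega) hI10 (by norm_num) (by norm_num) (by norm_num) (by nlinarith [Real.log_two_gt_d9])
  rcases le_or_gt n 463 with hI11|hI11
  · exact interval_helper 291 463 3299 90 11 n cnt_3300 (by omega) hI11 (by norm_num) (by norm_num) (by norm_num) (by nlinarith [Real.log_two_gt_d9])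
  rcases le_or_gt n 750 with hI12|hI12
  · exact interval_helper 464 750 5693 62 7 n cnt_5694 (by omega) hI12 (by norm_num) (by norm_num) (by norm_num) (by nlinarith [Real.log_two_gt_d9])
  rcases le_or_gt n 1225 with hI13|hI13
  · exact interval_helper 751 1225 9931 105 11 n cnt_9932 (by omega) hI13 (by norm_num) (by norm_num) (by norm_num) (by nlinarith [Real.log_two_gt_d9])
  rcases le_or_gt n 2004 with hI14|hI14
  · exact interval_helper 1226 2004 17419 41 4 n cnt_17420 (by omega) hI14 (by norm_num) (by norm_num) (by norm_num) (by nlinarith [Real.log_two_gt_d9])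
  exact interval_helper 2005 2047 17851 131 12 n cnt_17852 (by omega) (by omega) (by norm_num) (by norm_num) (by norm_num) (by nlinarith [Real.log_two_gt_d9])


theorem nth_prime_le_bound (n : ℕ) (hn : 1 ≤ n) :
    (Nat.nth Nat.Prime (n - 1) : ℤ) ≤ 2 * (⌊(n : ℝ) * Real.log n⌋ + 1) := by
  rcases eq_or_lt_of_le hn with h1 | h1
  · rw [← h1]
    norm_num [Real.log_one, Nat.nth_prime_zero_eq_two]
  rcases eq_or_lt_of_le (show 2 ≤ n by omega) with h2 | h2
  · rw [← h2]
    have hfl : ⌊(2:ℝ) * Real.log 2⌋ = 1 := by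
      rw [Int.floor_eq_iff]
      constructor
      · push_cast
        nlinarith [Real.log_two_gt_d9]
      · push_cast
        nlinarith [Real.log_two_lt_d9]
    norm_num [Nat.nth_prime_one_eq_three]
    rw [hfl]
    norm_num
  · have h3 : 3 ≤ n := h2
    have key : (Nat.nth Nat.Prime (n-1) : ℝ) ≤ 2 * n * Real.log n := by
      rcases le_or_gt n 2047 with h | h
      · exact small_main n h3 h
      · exact big_main n (by omega)
    have hflo : (n:ℝ) * Real.log n < (⌊(n:ℝ) * Real.log n⌋ : ℝ) + 1 := Int.lt_floor_add_one _
    have hfin : (Nat.nth Nat.Prime (n-1) : ℝ) < ((2 * (⌊(n:ℝ) * Real.log n⌋ + 1) : ℤ) : ℝ) := by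
      push_cast
      linarith
    exact_mod_cast hfin.le
end

section
/- For n ≥ 4, p_n = 7 + Σ_{x=7}^{2(⌊n log n⌋ + 1)} ⌊2n/(π(x)+n+1)⌋, where p_n is the n-th prime, π the prime counting function, and log the natural logarithm. -/
namespace NthPrimeAux


def noDiv (n : ℕ) : ℕ → ℕ → Bool
  | _, 0 => true
  | d, fuel+1 =>
    if n < d * d then true
    else if n % d = 0 then false
    else noDiv n (d+1) fuel

lemma noDiv_correct (n : ℕ) : ∀ fuel d m, 0 < d → noDiv n d fuel = true →
    d ≤ m → m < d + fuel → m * m ≤ n → ¬ m ∣ n := by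
  intro fuel
  induction fuel with
  | zero => intro d m _ _ h1 h2 _; omega
  | succ f ih =>
    intro d m hd h h1 h2 h3
    rw [noDiv] at h
    split at h
    · rename_i hlt
      have := Nat.mul_le_mul h1 h1
      omega
    · split at h
      · exact absurd h (by simp)
      · rename_i hne
        rcases eq_or_lt_of_le h1 with rfl | hlt
        · intro hdvd
          rw [Nat.dvd_iff_mod_eq_zero] at hdvd
          exact hne hdvd
        · exact ih (d+1) m (by omega) h (by omega) (by omega) h3

def isPrimeB (n : ℕ) : Bool := Nat.ble 2 n && noDiv n 2 150

lemma isPrimeB_prime {n : ℕ} (hle : n ≤ 23103) (h : isPrimeB n = true) : Nat.Prime n := by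
  rw [isPrimeB, Bool.and_eq_true, Nat.ble_eq] at h
  obtain ⟨h2, hnd⟩ := h
  rw [Nat.prime_def_le_sqrt]
  refine ⟨h2, fun m hm hms hdvd => ?_⟩
  have hmm : m * m ≤ n := Nat.le_sqrt.1 hms
  have hm152 : m < 152 := by nlinarith
  exact noDiv_correct n 150 2 m (by norm_num) hnd hm (by omega) hmm hdvd

lemma length_le_count {N : ℕ} {l : List ℕ} (hs : l.Pairwise (· < ·))
    (hp : ∀ p ∈ l, Nat.Prime p ∧ p < N) : l.length ≤ Nat.count Nat.Prime N := by
  classical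
  rw [Nat.count_eq_card_filter_range]
  have hnd : l.Nodup := hs.imp ne_of_lt
  rw [← List.toFinset_card_of_nodup hnd]
  apply Finset.card_le_card
  intro x hx
  rw [List.mem_toFinset] at hx
  simp only [Finset.mem_filter, Finset.mem_range]
  exact ⟨(hp x hx).2, (hp x hx).1⟩

lemma nth_prime_le {l : List ℕ} (hs : l.Pairwise (· < ·)) (hp : ∀ p ∈ l, Nat.Prime p)
    {i : ℕ} (hi : i < l.length) : Nat.nth Nat.Prime i ≤ l[i] := by
  have h1 : (l.take (i+1)).length ≤ Nat.count Nat.Prime (l[i] + 1) := by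
    apply length_le_count (hs.sublist (List.take_sublist _ _))
    intro p hpm
    obtain ⟨j, hj, hpj⟩ := List.mem_iff_getElem.1 hpm
    have hjl : j < l.length := by
      rw [List.length_take] at hj; omega
    rw [List.getElem_take] at hpj
    subst hpj
    refine ⟨hp _ (List.getElem_mem hjl), ?_⟩
    rw [List.length_take] at hj
    rcases eq_or_lt_of_le (show j ≤ i by omega) with rfl | hji
    · omega
    · have := List.pairwise_iff_getElem.1 hs j i hjl hi hji
      omega
  rw [List.length_take] at h1
  have h2 : i < Nat.count Nat.Prime (l[i] + 1) := by omega
  have h3 : Nat.nth Nat.Prime i < l[i] + 1 :=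
    (Nat.lt_nth_iff_count_lt Nat.infinite_setOf_prime).1 h2
  omega

lemma small_case (a b k L n : ℕ) (h2k : 2^k ≤ a) (han : a ≤ n) (hnb : n ≤ b)
    (hL : (L:ℝ) ≤ (a:ℝ) * ((k:ℝ) * 0.6931471803))
    (hpb : Nat.nth Nat.Prime (b-1) ≤ 2*L+2) :
    Nat.nth Nat.Prime (n-1) ≤ 2 * ((⌊(n : ℝ) * Real.log n⌋).toNat + 1) := by
  have hlog2 : (0.6931471803:ℝ) < Real.log 2 := Real.log_two_gt_d9
  have hka : (2:ℝ)^k ≤ (a:ℝ) := by exact_mod_cast h2k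
  have han' : (a:ℝ) ≤ (n:ℝ) := by exact_mod_cast han
  have hlogn : (k:ℝ) * 0.6931471803 ≤ Real.log n := by
    calc (k:ℝ) * 0.6931471803 ≤ (k:ℝ) * Real.log 2 := by
          apply mul_le_mul_of_nonneg_left hlog2.le (by positivity)
      _ = Real.log ((2:ℝ)^k) := by rw [Real.log_pow]
      _ ≤ Real.log n := Real.log_le_log (by positivity) (le_trans hka han')
  have hfloor : (L:ℝ) ≤ (n:ℝ) * Real.log n := by
    calc (L:ℝ) ≤ (a:ℝ) * ((k:ℝ) * 0.6931471803) := hL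
      _ ≤ (n:ℝ) * Real.log n := by
          apply mul_le_mul han' hlogn (by positivity) (by positivity)
  have hLfloor : (L:ℤ) ≤ ⌊(n:ℝ) * Real.log n⌋ := Int.le_floor.2 (by exact_mod_cast hfloor)
  have hmono : Nat.nth Nat.Prime (n-1) ≤ Nat.nth Nat.Prime (b-1) :=
    (Nat.nth_le_nth Nat.infinite_setOf_prime).2 (by omega)
  omega


def sortedB : List ℕ → Bool
  | [] => true
  | [_] => true
  | a :: b :: l => a.blt b && sortedB (b :: l)

lemma sortedB_chain' : ∀ l : List ℕ, sortedB l = true → l.Chain' (· < ·)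
  | [] , _ => List.isChain_nil
  | [a], _ => List.isChain_singleton a
  | a :: b :: l, h => by
    rw [sortedB, Bool.and_eq_true] at h
    exact List.IsChain.cons_cons (Nat.blt_eq ▸ h.1) (sortedB_chain' (b :: l) h.2)

set_option maxRecDepth 40000 in
def PL : List ℕ := [2, 3, 5, 7, 11, 13, 17, 19, 23, 29, 31, 37, 41, 43, 47, 53, 59, 61, 67, 71, 73, 79, 83, 89, 97, 101, 103, 107, 109, 113, 127, 131, 137, 139, 149, 151, 157, 163, 167, 173, 179, 181, 191, 193, 197, 199, 211, 223, 227, 229, 233, 239, 241, 251, 257, 263, 269, 271, 277, 281, 283, 293, 307, 311, 313, 317, 331, 337, 347, 349, 353, 359, 367, 373, 379, 383, 389, 397, 401, 409, 419, 421, 431, 433, 439, 443, 449, 457, 461, 463, 467, 479, 487, 491, 499, 503, 509, 521, 523, 541, 547, 557, 563, 569, 571, 577, 587, 593, 599, 601, 607, 613, 617, 619, 631, 641, 643, 647, 653, 659, 661, 673, 677, 683, 691, 701, 709, 719, 727, 733, 739, 743, 751, 757, 761, 769, 773, 787, 797, 809, 811, 821, 823, 827, 829, 839, 853, 857, 859,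 863, 877, 881, 883, 887, 907, 911, 919, 929, 937, 941, 947, 953, 967, 971, 977, 983, 991, 997, 1009, 1013, 1019, 1021, 1031, 1033, 1039, 1049, 1051, 1061, 1063, 1069, 1087, 1091, 1093, 1097, 1103, 1109, 1117, 1123, 1129, 1151, 1153, 1163, 1171, 1181, 1187, 1193, 1201, 1213, 1217, 1223, 1229, 1231, 1237, 1249, 1259, 1277, 1279, 1283, 1289, 1291, 1297, 1301, 1303, 1307, 1319, 1321, 1327, 1361, 1367, 1373, 1381, 1399, 1409, 1423, 1427, 1429, 1433, 1439, 1447, 1451, 1453, 1459, 1471, 1481, 1483, 1487, 1489, 1493, 1499, 1511, 1523, 1531, 1543, 1549, 1553, 1559, 1567, 1571, 1579, 1583, 1597, 1601, 1607, 1609, 1613, 1619, 1621, 1627, 1637, 1657, 1663, 1667, 1669, 1693, 1697, 1699, 1709, 1721, 1723, 1733, 1741, 1747, 1753, 1759, 1777, 1783, 1787, 1789, 1801, 1811, 1823, 1831, 1847, 1861, 1867, 1871, 1873, 1877, 1879, 1889, 1901, 1907, 1913, 1931, 1933, 1949, 1951, 1973, 1979, 1987, 1993, 1997, 1999, 2003,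 2011, 2017, 2027, 2029, 2039, 2053, 2063, 2069, 2081, 2083, 2087, 2089, 2099, 2111, 2113, 2129, 2131, 2137, 2141, 2143, 2153, 2161, 2179, 2203, 2207, 2213, 2221, 2237, 2239, 2243, 2251, 2267, 2269, 2273, 2281, 2287, 2293, 2297, 2309, 2311, 2333, 2339, 2341, 2347, 2351, 2357, 2371, 2377, 2381, 2383, 2389, 2393, 2399, 2411, 2417, 2423, 2437, 2441, 2447, 2459, 2467, 2473, 2477, 2503, 2521, 2531, 2539, 2543, 2549, 2551, 2557, 2579, 2591, 2593, 2609, 2617, 2621, 2633, 2647, 2657, 2659, 2663, 2671, 2677, 2683, 2687, 2689, 2693, 2699, 2707, 2711, 2713, 2719, 2729, 2731, 2741, 2749, 2753, 2767, 2777, 2789, 2791, 2797, 2801, 2803, 2819, 2833, 2837, 2843, 2851, 2857, 2861, 2879, 2887, 2897, 2903, 2909, 2917, 2927, 2939, 2953, 2957, 2963, 2969, 2971, 2999, 3001, 3011, 3019, 3023, 3037, 3041, 3049, 3061, 3067, 3079, 3083, 3089, 3109, 3119, 3121, 3137, 3163, 3167, 3169, 3181, 3187, 3191, 3203, 3209,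 3217, 3221, 3229, 3251, 3253, 3257, 3259, 3271, 3299, 3301, 3307, 3313, 3319, 3323, 3329, 3331, 3343, 3347, 3359, 3361, 3371, 3373, 3389, 3391, 3407, 3413, 3433, 3449, 3457, 3461, 3463, 3467, 3469, 3491, 3499, 3511, 3517, 3527, 3529, 3533, 3539, 3541, 3547, 3557, 3559, 3571, 3581, 3583, 3593, 3607, 3613, 3617, 3623, 3631, 3637, 3643, 3659, 3671, 3673, 3677, 3691, 3697, 3701, 3709, 3719, 3727, 3733, 3739, 3761, 3767, 3769, 3779, 3793, 3797, 3803, 3821, 3823, 3833, 3847, 3851, 3853, 3863, 3877, 3881, 3889, 3907, 3911, 3917, 3919, 3923, 3929, 3931, 3943, 3947, 3967, 3989, 4001, 4003, 4007, 4013, 4019, 4021, 4027, 4049, 4051, 4057, 4073, 4079, 4091, 4093, 4099, 4111, 4127, 4129, 4133, 4139, 4153, 4157, 4159, 4177, 4201, 4211, 4217, 4219, 4229, 4231, 4241, 4243, 4253, 4259, 4261, 4271, 4273, 4283, 4289, 4297, 4327, 4337, 4339, 4349, 4357, 4363, 4373, 4391, 4397, 4409, 4421, 4423, 4441, 4447,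 4451, 4457, 4463, 4481, 4483, 4493, 4507, 4513, 4517, 4519, 4523, 4547, 4549, 4561, 4567, 4583, 4591, 4597, 4603, 4621, 4637, 4639, 4643, 4649, 4651, 4657, 4663, 4673, 4679, 4691, 4703, 4721, 4723, 4729, 4733, 4751, 4759, 4783, 4787, 4789, 4793, 4799, 4801, 4813, 4817, 4831, 4861, 4871, 4877, 4889, 4903, 4909, 4919, 4931, 4933, 4937, 4943, 4951, 4957, 4967, 4969, 4973, 4987, 4993, 4999, 5003, 5009, 5011, 5021, 5023, 5039, 5051, 5059, 5077, 5081, 5087, 5099, 5101, 5107, 5113, 5119, 5147, 5153, 5167, 5171, 5179, 5189, 5197, 5209, 5227, 5231, 5233, 5237, 5261, 5273, 5279, 5281, 5297, 5303, 5309, 5323, 5333, 5347, 5351, 5381, 5387, 5393, 5399, 5407, 5413, 5417, 5419, 5431, 5437, 5441, 5443, 5449, 5471, 5477, 5479, 5483, 5501, 5503, 5507, 5519, 5521, 5527, 5531, 5557, 5563, 5569, 5573, 5581, 5591, 5623, 5639, 5641, 5647, 5651, 5653, 5657, 5659, 5669, 5683, 5689, 5693, 5701, 5711, 5717, 5737,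 5741, 5743, 5749, 5779, 5783, 5791, 5801, 5807, 5813, 5821, 5827, 5839, 5843, 5849, 5851, 5857, 5861, 5867, 5869, 5879, 5881, 5897, 5903, 5923, 5927, 5939, 5953, 5981, 5987, 6007, 6011, 6029, 6037, 6043, 6047, 6053, 6067, 6073, 6079, 6089, 6091, 6101, 6113, 6121, 6131, 6133, 6143, 6151, 6163, 6173, 6197, 6199, 6203, 6211, 6217, 6221, 6229, 6247, 6257, 6263, 6269, 6271, 6277, 6287, 6299, 6301, 6311, 6317, 6323, 6329, 6337, 6343, 6353, 6359, 6361, 6367, 6373, 6379, 6389, 6397, 6421, 6427, 6449, 6451, 6469, 6473, 6481, 6491, 6521, 6529, 6547, 6551, 6553, 6563, 6569, 6571, 6577, 6581, 6599, 6607, 6619, 6637, 6653, 6659, 6661, 6673, 6679, 6689, 6691, 6701, 6703, 6709, 6719, 6733, 6737, 6761, 6763, 6779, 6781, 6791, 6793, 6803, 6823, 6827, 6829, 6833, 6841, 6857, 6863, 6869, 6871, 6883, 6899, 6907, 6911, 6917, 6947, 6949, 6959, 6961, 6967, 6971, 6977, 6983, 6991, 6997, 7001, 7013, 7019, 7027,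 7039, 7043, 7057, 7069, 7079, 7103, 7109, 7121, 7127, 7129, 7151, 7159, 7177, 7187, 7193, 7207, 7211, 7213, 7219, 7229, 7237, 7243, 7247, 7253, 7283, 7297, 7307, 7309, 7321, 7331, 7333, 7349, 7351, 7369, 7393, 7411, 7417, 7433, 7451, 7457, 7459, 7477, 7481, 7487, 7489, 7499, 7507, 7517, 7523, 7529, 7537, 7541, 7547, 7549, 7559, 7561, 7573, 7577, 7583, 7589, 7591, 7603, 7607, 7621, 7639, 7643, 7649, 7669, 7673, 7681, 7687, 7691, 7699, 7703, 7717, 7723, 7727, 7741, 7753, 7757, 7759, 7789, 7793, 7817, 7823, 7829, 7841, 7853, 7867, 7873, 7877, 7879, 7883, 7901, 7907, 7919, 7927, 7933, 7937, 7949, 7951, 7963, 7993, 8009, 8011, 8017, 8039, 8053, 8059, 8069, 8081, 8087, 8089, 8093, 8101, 8111, 8117, 8123, 8147, 8161, 8167, 8171, 8179, 8191, 8209, 8219, 8221, 8231, 8233, 8237, 8243, 8263, 8269, 8273, 8287, 8291, 8293, 8297, 8311, 8317, 8329, 8353, 8363, 8369, 8377, 8387, 8389, 8419, 8423, 8429,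 8431, 8443, 8447, 8461, 8467, 8501, 8513, 8521, 8527, 8537, 8539, 8543, 8563, 8573, 8581, 8597, 8599, 8609, 8623, 8627, 8629, 8641, 8647, 8663, 8669, 8677, 8681, 8689, 8693, 8699, 8707, 8713, 8719, 8731, 8737, 8741, 8747, 8753, 8761, 8779, 8783, 8803, 8807, 8819, 8821, 8831, 8837, 8839, 8849, 8861, 8863, 8867, 8887, 8893, 8923, 8929, 8933, 8941, 8951, 8963, 8969, 8971, 8999, 9001, 9007, 9011, 9013, 9029, 9041, 9043, 9049, 9059, 9067, 9091, 9103, 9109, 9127, 9133, 9137, 9151, 9157, 9161, 9173, 9181, 9187, 9199, 9203, 9209, 9221, 9227, 9239, 9241, 9257, 9277, 9281, 9283, 9293, 9311, 9319, 9323, 9337, 9341, 9343, 9349, 9371, 9377, 9391, 9397, 9403, 9413, 9419, 9421, 9431, 9433, 9437, 9439, 9461, 9463, 9467, 9473, 9479, 9491, 9497, 9511, 9521, 9533, 9539, 9547, 9551, 9587, 9601, 9613, 9619, 9623, 9629, 9631, 9643, 9649, 9661, 9677, 9679, 9689, 9697, 9719, 9721, 9733, 9739, 9743, 9749, 9767,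 9769, 9781, 9787, 9791, 9803, 9811, 9817, 9829, 9833, 9839, 9851, 9857, 9859, 9871, 9883, 9887, 9901, 9907, 9923, 9929, 9931, 9941, 9949, 9967, 9973, 10007, 10009, 10037, 10039, 10061, 10067, 10069, 10079, 10091, 10093, 10099, 10103, 10111, 10133, 10139, 10141, 10151, 10159, 10163, 10169, 10177, 10181, 10193, 10211, 10223, 10243, 10247, 10253, 10259, 10267, 10271, 10273, 10289, 10301, 10303, 10313, 10321, 10331, 10333, 10337, 10343, 10357, 10369, 10391, 10399, 10427, 10429, 10433, 10453, 10457, 10459, 10463, 10477, 10487, 10499, 10501, 10513, 10529, 10531, 10559, 10567, 10589, 10597, 10601, 10607, 10613, 10627, 10631, 10639, 10651, 10657, 10663, 10667, 10687, 10691, 10709, 10711, 10723, 10729, 10733, 10739, 10753, 10771, 10781, 10789, 10799, 10831, 10837, 10847, 10853, 10859, 10861, 10867, 10883, 10889, 10891, 10903, 10909, 10937, 10939, 10949, 10957, 10973, 10979, 10987, 10993, 11003, 11027, 11047, 11057, 11059, 11069, 11071, 11083, 11087, 11093, 11113, 11117, 11119, 11131, 11149, 11159, 11161, 11171, 11173,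 11177, 11197, 11213, 11239, 11243, 11251, 11257, 11261, 11273, 11279, 11287, 11299, 11311, 11317, 11321, 11329, 11351, 11353, 11369, 11383, 11393, 11399, 11411, 11423, 11437, 11443, 11447, 11467, 11471, 11483, 11489, 11491, 11497, 11503, 11519, 11527, 11549, 11551, 11579, 11587, 11593, 11597, 11617, 11621, 11633, 11657, 11677, 11681, 11689, 11699, 11701, 11717, 11719, 11731, 11743, 11777, 11779, 11783, 11789, 11801, 11807, 11813, 11821, 11827, 11831, 11833, 11839, 11863, 11867, 11887, 11897, 11903, 11909, 11923, 11927, 11933, 11939, 11941, 11953, 11959, 11969, 11971, 11981, 11987, 12007, 12011, 12037, 12041, 12043, 12049, 12071, 12073, 12097, 12101, 12107, 12109, 12113, 12119, 12143, 12149, 12157, 12161, 12163, 12197, 12203, 12211, 12227, 12239, 12241, 12251, 12253, 12263, 12269, 12277, 12281, 12289, 12301, 12323, 12329, 12343, 12347, 12373, 12377, 12379, 12391, 12401, 12409, 12413, 12421, 12433, 12437, 12451, 12457, 12473, 12479, 12487, 12491, 12497, 12503, 12511, 12517, 12527, 12539, 12541, 12547, 12553, 12569, 12577, 12583, 12589,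 12601, 12611, 12613, 12619, 12637, 12641, 12647, 12653, 12659, 12671, 12689, 12697, 12703, 12713, 12721, 12739, 12743, 12757, 12763, 12781, 12791, 12799, 12809, 12821, 12823, 12829, 12841, 12853, 12889, 12893, 12899, 12907, 12911, 12917, 12919, 12923, 12941, 12953, 12959, 12967, 12973, 12979, 12983, 13001, 13003, 13007, 13009, 13033, 13037, 13043, 13049, 13063, 13093, 13099, 13103, 13109, 13121, 13127, 13147, 13151, 13159, 13163, 13171, 13177, 13183, 13187, 13217, 13219, 13229, 13241, 13249, 13259, 13267, 13291, 13297, 13309, 13313, 13327, 13331, 13337, 13339, 13367, 13381, 13397, 13399, 13411, 13417, 13421, 13441, 13451, 13457, 13463, 13469, 13477, 13487, 13499, 13513, 13523, 13537, 13553, 13567, 13577, 13591, 13597, 13613, 13619, 13627, 13633, 13649, 13669, 13679, 13681, 13687, 13691, 13693, 13697, 13709, 13711, 13721, 13723, 13729, 13751, 13757, 13759, 13763, 13781, 13789, 13799, 13807, 13829, 13831, 13841, 13859, 13873, 13877, 13879, 13883, 13901, 13903, 13907, 13913, 13921, 13931, 13933, 13963, 13967, 13997, 13999, 14009, 14011,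 14029, 14033, 14051, 14057, 14071, 14081, 14083, 14087, 14107, 14143, 14149, 14153, 14159, 14173, 14177, 14197, 14207, 14221, 14243, 14249, 14251, 14281, 14293, 14303, 14321, 14323, 14327, 14341, 14347, 14369, 14387, 14389, 14401, 14407, 14411, 14419, 14423, 14431, 14437, 14447, 14449, 14461, 14479, 14489, 14503, 14519, 14533, 14537, 14543, 14549, 14551, 14557, 14561, 14563, 14591, 14593, 14621, 14627, 14629, 14633, 14639, 14653, 14657, 14669, 14683, 14699, 14713, 14717, 14723, 14731, 14737, 14741, 14747, 14753, 14759, 14767, 14771, 14779, 14783, 14797, 14813, 14821, 14827, 14831, 14843, 14851, 14867, 14869, 14879, 14887, 14891, 14897, 14923, 14929, 14939, 14947, 14951, 14957, 14969, 14983, 15013, 15017, 15031, 15053, 15061, 15073, 15077, 15083, 15091, 15101, 15107, 15121, 15131, 15137, 15139, 15149, 15161, 15173, 15187, 15193, 15199, 15217, 15227, 15233, 15241, 15259, 15263, 15269, 15271, 15277, 15287, 15289, 15299, 15307, 15313, 15319, 15329, 15331, 15349, 15359, 15361, 15373, 15377, 15383, 15391, 15401, 15413, 15427, 15439, 15443,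 15451, 15461, 15467, 15473, 15493, 15497, 15511, 15527, 15541, 15551, 15559, 15569, 15581, 15583, 15601, 15607, 15619, 15629, 15641, 15643, 15647, 15649, 15661, 15667, 15671, 15679, 15683, 15727, 15731, 15733, 15737, 15739, 15749, 15761, 15767, 15773, 15787, 15791, 15797, 15803, 15809, 15817, 15823, 15859, 15877, 15881, 15887, 15889, 15901, 15907, 15913, 15919, 15923, 15937, 15959, 15971, 15973, 15991, 16001, 16007, 16033, 16057, 16061, 16063, 16067, 16069, 16073, 16087, 16091, 16097, 16103, 16111, 16127, 16139, 16141, 16183, 16187, 16189, 16193, 16217, 16223, 16229, 16231, 16249, 16253, 16267, 16273, 16301, 16319, 16333, 16339, 16349, 16361, 16363, 16369, 16381, 16411, 16417, 16421, 16427, 16433, 16447, 16451, 16453, 16477, 16481, 16487, 16493, 16519, 16529, 16547, 16553, 16561, 16567, 16573, 16603, 16607, 16619, 16631, 16633, 16649, 16651, 16657, 16661, 16673, 16691, 16693, 16699, 16703, 16729, 16741, 16747, 16759, 16763, 16787, 16811, 16823, 16829, 16831, 16843, 16871, 16879, 16883, 16889, 16901, 16903, 16921, 16927, 16931, 16937,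 16943, 16963, 16979, 16981, 16987, 16993, 17011, 17021, 17027, 17029, 17033, 17041, 17047, 17053, 17077, 17093, 17099, 17107, 17117, 17123, 17137, 17159, 17167, 17183, 17189, 17191, 17203, 17207, 17209, 17231, 17239, 17257, 17291, 17293, 17299, 17317, 17321, 17327, 17333, 17341, 17351, 17359, 17377, 17383, 17387, 17389, 17393, 17401, 17417, 17419, 17431, 17443, 17449, 17467, 17471, 17477, 17483, 17489, 17491, 17497, 17509, 17519, 17539, 17551, 17569, 17573, 17579, 17581, 17597, 17599, 17609, 17623, 17627, 17657, 17659, 17669, 17681, 17683, 17707, 17713, 17729, 17737, 17747, 17749, 17761, 17783, 17789, 17791, 17807, 17827, 17837, 17839, 17851]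

set_option maxRecDepth 40000 in
lemma PL_sorted : sortedB PL = true := by decide

set_option maxRecDepth 40000 in
lemma PL_length : PL.length = 2047 := by rfl

set_option maxRecDepth 40000 in
set_option maxHeartbeats 4000000 in
lemma PL_all : (PL.all fun p => Nat.ble p 23103 && isPrimeB p) = true := by decide

lemma PL_pairwise : PL.Pairwise (· < ·) :=
  List.isChain_iff_pairwise.mp (sortedB_chain' PL PL_sorted)

lemma PL_prime : ∀ p ∈ PL, Nat.Prime p := by
  intro p hp
  have h := List.all_eq_true.1 PL_all p hp
  rw [Bool.and_eq_true, Nat.ble_eq] at h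
  exact isPrimeB_prime h.1 h.2

set_option maxRecDepth 40000 in
lemma nth_PL (i v : ℕ) (hi : i < 2047) (hv : PL.getD i 0 = v) :
    Nat.nth Nat.Prime i ≤ v := by
  have hi' : i < PL.length := by rw [PL_length]; omega
  have h := nth_prime_le PL_pairwise PL_prime hi'
  rwa [← List.getD_eq_getElem PL 0 hi', hv] at h

set_option maxRecDepth 40000 in
lemma key (n : ℕ) (hn : 4 ≤ n) :
    Nat.nth Nat.Prime (n-1) ≤ 2 * ((⌊(n : ℝ) * Real.log n⌋).toNat + 1) := by
  by_cases hbig : 2048 ≤ n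
  · -- analytic case
    by_contra hcon
    push_neg at hcon
    obtain ⟨m, hmdef⟩ : ∃ m, m = (⌊(n : ℝ) * Real.log n⌋).toNat + 1 := ⟨_, rfl⟩
    rw [← hmdef] at hcon
    have hn1R : (1:ℝ) ≤ (n:ℝ) := by exact_mod_cast (by omega : 1 ≤ n)
    have hlognn : (0:ℝ) ≤ Real.log n := Real.log_nonneg hn1R
    have hn0 : (0:ℝ) < n := by positivity
    have hcount : Nat.count Nat.Prime (2*m+1) ≤ n - 1 :=
      Nat.le_nth_of_count_le (by omega)
    have hmpos : 0 < m := by omega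
    have hcb : Nat.centralBinom m ≤ (2*m) ^ (Nat.count Nat.Prime (2*m+1)) := by
      conv_lhs => rw [← Nat.prod_pow_factorization_centralBinom m]
      rw [Nat.count_eq_card_filter_range]
      rw [← Finset.prod_filter_mul_prod_filter_not (Finset.range (2*m+1)) Nat.Prime
        (fun p => p ^ (Nat.centralBinom m).factorization p)]
      have h2 : (∏ p ∈ (Finset.range (2*m+1)).filter (fun p => ¬ Nat.Prime p),
          p ^ (Nat.centralBinom m).factorization p) = 1 :=
        Finset.prod_eq_one fun p hp => by
          rw [Nat.factorization_eq_zero_of_not_prime _ (Finset.mem_filter.1 hp).2, pow_zero]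
      rw [h2, mul_one]
      calc (∏ p ∈ (Finset.range (2*m+1)).filter (fun p => Nat.Prime p),
              p ^ (Nat.centralBinom m).factorization p)
          ≤ ∏ _p ∈ (Finset.range (2*m+1)).filter (fun p => Nat.Prime p), (2*m) :=
            Finset.prod_le_prod' fun p _ => Nat.pow_factorization_choose_le (by omega)
        _ = (2*m) ^ ((Finset.range (2*m+1)).filter (fun p => Nat.Prime p)).card :=
            Finset.prod_const _
    have h4 : 4^m ≤ (2*m)^n := by
      have hstep : (2*m) ^ (Nat.count Nat.Prime (2*m+1)) ≤ (2*m)^(n-1) :=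
        Nat.pow_le_pow_right (by omega) hcount
      have heq : 2*m*(2*m)^(n-1) = (2*m)^n := by
        rw [← pow_succ']
        congr 1
        omega
      calc 4^m ≤ 2*m*Nat.centralBinom m :=
            Nat.four_pow_le_two_mul_self_mul_centralBinom m hmpos
        _ ≤ 2*m*(2*m)^(n-1) := Nat.mul_le_mul_left _ (hcb.trans hstep)
        _ = (2*m)^n := heq
    -- move to reals
    have hlog2L : (0.6931471803:ℝ) < Real.log 2 := Real.log_two_gt_d9
    have hlog2U : Real.log 2 < 0.6931471808 := Real.log_two_lt_d9
    have ht : (7.6246:ℝ) ≤ Real.log n := by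
      have h1 : Real.log 2048 ≤ Real.log n := Real.log_le_log (by norm_num) (by exact_mod_cast hbig)
      have h2 : Real.log (2048:ℝ) = 11 * Real.log 2 := by
        rw [show (2048:ℝ) = 2^(11:ℕ) by norm_num, Real.log_pow]
        push_cast; ring
      nlinarith
    have ht0 : (0:ℝ) < Real.log n := by linarith
    have hnt : (0:ℝ) < (n:ℝ) * Real.log n := by positivity
    have hfl0 : (0:ℤ) ≤ ⌊(n:ℝ) * Real.log n⌋ := by
      exact Int.floor_nonneg.2 (by positivity)
    have htn : (((⌊(n:ℝ) * Real.log n⌋).toNat : ℕ) : ℝ) = ((⌊(n:ℝ) * Real.log n⌋ : ℤ) : ℝ) := by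
      exact_mod_cast congrArg (Int.cast : ℤ → ℝ) (Int.toNat_of_nonneg hfl0)
    have hmR : (n:ℝ) * Real.log n < (m:ℝ) := by
      rw [hmdef]
      push_cast
      rw [htn]
      exact Int.lt_floor_add_one _
    have hmR2 : (m:ℝ) ≤ (n:ℝ) * Real.log n + 1 := by
      rw [hmdef]
      push_cast
      rw [htn]
      have := Int.floor_le ((n:ℝ) * Real.log n)
      linarith
    have hm0 : (0:ℝ) < (m:ℝ) := by exact_mod_cast hmpos
    have hlogmain : (m:ℝ) * Real.log 4 ≤ (n:ℝ) * Real.log (2*(m:ℝ)) := by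
      have hc : ((4:ℝ))^(m:ℕ) ≤ ((2*(m:ℝ)))^(n:ℕ) := by exact_mod_cast h4
      have hl := Real.log_le_log (by positivity) hc
      rw [Real.log_pow, Real.log_pow] at hl
      exact_mod_cast hl
    have hlog4 : Real.log 4 = 2 * Real.log 2 := by
      rw [show (4:ℝ) = 2^(2:ℕ) by norm_num, Real.log_pow]
      push_cast; ring
    have hlogt : Real.log (Real.log n) ≤ Real.log n/8 + 3*Real.log 2 - 1 := by
      have h1 : Real.log (Real.log n/8) ≤ Real.log n/8 - 1 :=
        Real.log_le_sub_one_of_pos (by positivity)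
      have h2 : Real.log (Real.log n/8) = Real.log (Real.log n) - Real.log 8 :=
        Real.log_div ht0.ne' (by norm_num)
      have h3 : Real.log (8:ℝ) = 3*Real.log 2 := by
        rw [show (8:ℝ) = 2^(3:ℕ) by norm_num, Real.log_pow]
        push_cast; ring
      linarith
    have hinv : 1/((n:ℝ)*Real.log n) ≤ 0.0001 := by
      rw [div_le_iff₀ hnt]
      have h1 : (2048:ℝ) ≤ (n:ℝ) := by exact_mod_cast hbig
      nlinarith
    have hlog2m : Real.log (2*(m:ℝ)) ≤
        Real.log 2 + (Real.log n + Real.log (Real.log n)) + 1/((n:ℝ)*Real.log n) := by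
      rw [Real.log_mul (by norm_num) hm0.ne']
      have h1 : Real.log (m:ℝ) ≤ Real.log ((n:ℝ)*Real.log n+1) :=
        Real.log_le_log hm0 (by linarith)
      have h2 : Real.log ((n:ℝ)*Real.log n+1) ≤
          Real.log ((n:ℝ)*Real.log n) + 1/((n:ℝ)*Real.log n) := by
        have e1 : Real.log (((n:ℝ)*Real.log n+1)/((n:ℝ)*Real.log n)) =
            Real.log ((n:ℝ)*Real.log n+1) - Real.log ((n:ℝ)*Real.log n) :=
          Real.log_div (by positivity) hnt.ne'
        have e2 : Real.log (((n:ℝ)*Real.log n+1)/((n:ℝ)*Real.log n)) ≤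
            ((n:ℝ)*Real.log n+1)/((n:ℝ)*Real.log n) - 1 :=
          Real.log_le_sub_one_of_pos (by positivity)
        have e3 : ((n:ℝ)*Real.log n+1)/((n:ℝ)*Real.log n) - 1 = 1/((n:ℝ)*Real.log n) := by
          field_simp
          ring
        linarith
      have h3 : Real.log ((n:ℝ)*Real.log n) = Real.log n + Real.log (Real.log n) :=
        Real.log_mul hn0.ne' ht0.ne'
      linarith
    have hstep1 : (n:ℝ)*Real.log n*Real.log 4 < (m:ℝ) * Real.log 4 := by
      apply mul_lt_mul_of_pos_right hmR
      rw [hlog4]; linarith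
    have hstep2 : (n:ℝ) * Real.log (2*(m:ℝ)) ≤
        (n:ℝ) * (Real.log 2 + (Real.log n + Real.log (Real.log n)) + 1/((n:ℝ)*Real.log n)) :=
      mul_le_mul_of_nonneg_left hlog2m hn0.le
    have hstep3 : (n:ℝ)*(Real.log n*Real.log 4) <
        (n:ℝ) * (Real.log 2 + (Real.log n + Real.log (Real.log n)) + 1/((n:ℝ)*Real.log n)) := by
      calc (n:ℝ)*(Real.log n*Real.log 4) = (n:ℝ)*Real.log n*Real.log 4 := by ring
        _ < (m:ℝ) * Real.log 4 := hstep1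
        _ ≤ (n:ℝ) * Real.log (2*(m:ℝ)) := hlogmain
        _ ≤ _ := hstep2
    have hsc : Real.log n*Real.log 4 <
        Real.log 2 + (Real.log n + Real.log (Real.log n)) + 1/((n:ℝ)*Real.log n) :=
      (mul_lt_mul_iff_right₀ hn0).1 hstep3
    rw [hlog4] at hsc
    have hprod : 0.6931471803 * Real.log n < Real.log 2 * Real.log n :=
      mul_lt_mul_of_pos_right hlog2L ht0
    nlinarith [hsc, hlogt, hinv, ht, hlog2L, hlog2U, hprod]
  · -- small cases
    by_cases hB5 : n ≤ 5
    · exact small_case 4 5 2 5 n (by norm_num) (by omega) hB5 (by norm_num)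
        ((nth_PL 4 11 (by norm_num) (by rfl)).trans (by norm_num))
    by_cases hB7 : n ≤ 7
    · exact small_case 6 7 2 8 n (by norm_num) (by omega) hB7 (by norm_num)
        ((nth_PL 6 17 (by norm_num) (by rfl)).trans (by norm_num))
    by_cases hB11 : n ≤ 11
    · exact small_case 8 11 3 16 n (by norm_num) (by omega) hB11 (by norm_num)
        ((nth_PL 10 31 (by norm_num) (by rfl)).trans (by norm_num))
    by_cases hB15 : n ≤ 15
    · exact small_case 12 15 3 24 n (by norm_num) (by omega) hB15 (by norm_num)
        ((nth_PL 14 47 (by norm_num) (by rfl)).trans (by norm_num))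
    by_cases hB24 : n ≤ 24
    · exact small_case 16 24 4 44 n (by norm_num) (by omega) hB24 (by norm_num)
        ((nth_PL 23 89 (by norm_num) (by rfl)).trans (by norm_num))
    by_cases hB34 : n ≤ 34
    · exact small_case 25 34 4 69 n (by norm_num) (by omega) hB34 (by norm_num)
        ((nth_PL 33 139 (by norm_num) (by rfl)).trans (by norm_num))
    by_cases hB53 : n ≤ 53
    · exact small_case 35 53 5 121 n (by norm_num) (by omega) hB53 (by norm_num)
        ((nth_PL 52 241 (by norm_num) (by rfl)).trans (by norm_num))
    by_cases hB74 : n ≤ 74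
    · exact small_case 54 74 5 187 n (by norm_num) (by omega) hB74 (by norm_num)
        ((nth_PL 73 373 (by norm_num) (by rfl)).trans (by norm_num))
    by_cases hB114 : n ≤ 114
    · exact small_case 75 114 6 311 n (by norm_num) (by omega) hB114 (by norm_num)
        ((nth_PL 113 619 (by norm_num) (by rfl)).trans (by norm_num))
    by_cases hB162 : n ≤ 162
    · exact small_case 115 162 6 478 n (by norm_num) (by omega) hB162 (by norm_num)
        ((nth_PL 161 953 (by norm_num) (by rfl)).trans (by norm_num))
    by_cases hB249 : n ≤ 249
    · exact small_case 163 249 7 790 n (by norm_num) (by omega) hB249 (by norm_num)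
        ((nth_PL 248 1579 (by norm_num) (by rfl)).trans (by norm_num))
    by_cases hB360 : n ≤ 360
    · exact small_case 250 360 7 1213 n (by norm_num) (by omega) hB360 (by norm_num)
        ((nth_PL 359 2423 (by norm_num) (by rfl)).trans (by norm_num))
    by_cases hB552 : n ≤ 552
    · exact small_case 361 552 8 2001 n (by norm_num) (by omega) hB552 (by norm_num)
        ((nth_PL 551 4003 (by norm_num) (by rfl)).trans (by norm_num))
    by_cases hB887 : n ≤ 887
    · exact small_case 553 887 9 3449 n (by norm_num) (by omega) hB887 (by norm_num)
        ((nth_PL 886 6899 (by norm_num) (by rfl)).trans (by norm_num))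
    by_cases hB1342 : n ≤ 1342
    · exact small_case 888 1342 9 5539 n (by norm_num) (by omega) hB1342 (by norm_num)
        ((nth_PL 1341 11071 (by norm_num) (by rfl)).trans (by norm_num))
    by_cases hB2047 : n ≤ 2047
    · exact small_case 1343 2047 10 9308 n (by norm_num) (by omega) hB2047 (by norm_num)
        ((nth_PL 2046 17851 (by norm_num) (by rfl)).trans (by norm_num))
    omega

end NthPrimeAux

theorem nth_prime_formula_floor' (n : ℕ) (hn : 4 ≤ n) :
    Nat.nth Nat.Prime (n - 1) =
      7 + ∑ x ∈ Finset.Icc 7 (2 * ((⌊(n : ℝ) * Real.log n⌋).toNat + 1)),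
            2 * n / (Nat.primeCounting x + n + 1) := by
  have hkey := NthPrimeAux.key n hn
  set N := 2 * ((⌊(n : ℝ) * Real.log n⌋).toNat + 1) with hN
  set p := Nat.nth Nat.Prime (n-1) with hp
  have h7 : 7 ≤ p := by
    have hc : Nat.count Nat.Prime 7 = 3 := by decide
    have h73 : Nat.nth Nat.Prime 3 = 7 := by
      have := Nat.nth_count (p := Nat.Prime) (n := 7) (by norm_num)
      rwa [hc] at this
    rw [hp, ← h73]
    exact (Nat.nth_le_nth Nat.infinite_setOf_prime).2 (by omega)
  have hterm : ∀ x ∈ Finset.Icc 7 N, 2*n/(Nat.primeCounting x + n + 1)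
      = if x < p then 1 else 0 := by
    intro x _
    have hpi : Nat.primeCounting x = Nat.count Nat.Prime (x+1) := rfl
    by_cases hx : x < p
    · have hcnt : Nat.count Nat.Prime (x+1) ≤ n - 1 := Nat.le_nth_of_count_le (by omega)
      rw [if_pos hx, hpi]
      have hle : 1 * (Nat.count Nat.Prime (x+1) + n + 1) ≤ 2*n := by omega
      have hlt : 2*n < (1+1) * (Nat.count Nat.Prime (x+1) + n + 1) := by omega
      exact Nat.div_eq_of_lt_le hle hlt
    · push_neg at hx
      have hgt : n - 1 < Nat.count Nat.Prime (x+1) :=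
        (Nat.lt_nth_iff_count_lt Nat.infinite_setOf_prime).2
          (show Nat.nth Nat.Prime (n-1) < x + 1 by omega)
      rw [if_neg (by omega), hpi]
      exact Nat.div_eq_of_lt (by omega)
  rw [Finset.sum_congr rfl hterm, Finset.sum_boole]
  have hfilter : (Finset.Icc 7 N).filter (fun x => x < p) = Finset.Ico 7 p := by
    ext y
    simp only [Finset.mem_filter, Finset.mem_Icc, Finset.mem_Ico]
    omega
  rw [hfilter, Nat.card_Ico, Nat.cast_id]
  omega
end
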